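/- Let q, a ∈ ℂ with |q| < 1 and |a| < 1, and let φ(a,q) = exp(∑_{d=1}^∞ a^d / (d(1−q^d)²)) and ψ(a,q) = ∑_{d=0}^∞ a^d / (q;q)_d. Then φ(a,q) = φ(aq,q) · ψ(a,q). -/

import Mathlib

open Filter Finset

/-- The closed-sector topological string partition function
`φ(a,q) = exp(∑_{d=1}^∞ a^d / (d(1−q^d)²))`. -/
noncomputable def phiClosed (q a : ℂ) : ℂ :=
  Complex.exp (∑' d : ℕ, a ^ (d + 1) / (((d : ℂ) + 1) * (1 - q ^ (d + 1)) ^ 2))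

/-- The open string partition function `ψ(a,q) = ∑_{d=0}^∞ a^d / (q;q)_d`. -/
noncomputable def psiOpen (q a : ℂ) : ℂ :=
  ∑' d : ℕ, a ^ d / ∏ k ∈ Finset.range d, (1 - q ^ (k + 1))

/-- Auxiliary: `F(a,q) = exp(∑_{d=1}^∞ a^d/(d(1-q^d)))`, which is `φ(a,q)/φ(aq,q)`. -/
noncomputable def Fser (q a : ℂ) : ℂ :=
  Complex.exp (∑' d : ℕ, a ^ (d + 1) / (((d : ℂ) + 1) * (1 - q ^ (d + 1))))

namespace PhiPsiAux

lemma delta_le (q : ℂ) (hq : ‖q‖ < 1) (d : ℕ) : 1 - ‖q‖ ≤ ‖1 - q ^ (d + 1)‖ := by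
  have h1 : ‖q‖ ^ (d + 1) ≤ ‖q‖ := by
    calc ‖q‖ ^ (d + 1) ≤ ‖q‖ ^ 1 :=
      pow_le_pow_of_le_one (norm_nonneg q) hq.le (by omega)
    _ = ‖q‖ := pow_one _
  calc 1 - ‖q‖ ≤ 1 - ‖q‖ ^ (d + 1) := by linarith
  _ = ‖(1 : ℂ)‖ - ‖q ^ (d + 1)‖ := by simp [norm_pow]
  _ ≤ ‖1 - q ^ (d + 1)‖ := norm_sub_norm_le _ _

lemma delta_pos (q : ℂ) (hq : ‖q‖ < 1) : (0 : ℝ) < 1 - ‖q‖ := by linarith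

lemma one_sub_ne (q : ℂ) (hq : ‖q‖ < 1) (d : ℕ) : (1 : ℂ) - q ^ (d + 1) ≠ 0 := by
  intro h
  have := delta_le q hq d
  rw [h, norm_zero] at this
  linarith [delta_pos q hq]

lemma cast_ne (d : ℕ) : ((d : ℂ) + 1) ≠ 0 :=
  Nat.cast_add_one_ne_zero d

lemma summable_phi (q a : ℂ) (hq : ‖q‖ < 1) (ha : ‖a‖ < 1) :
    Summable (fun d : ℕ => a ^ (d + 1) / (((d : ℂ) + 1) * (1 - q ^ (d + 1)) ^ 2)) := by
  set δ := 1 - ‖q‖ with hδ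
  have hδ0 := delta_pos q hq
  refine Summable.of_norm_bounded (g := fun d => (‖a‖ / δ ^ 2) * ‖a‖ ^ d)
    ((summable_geometric_of_lt_one (norm_nonneg a) ha).mul_left _) (fun d => ?_)
  have hc := delta_le q hq d
  rw [norm_div, norm_mul, norm_pow, norm_pow]
  have h1 : (1 : ℝ) ≤ ‖(d : ℂ) + 1‖ := by
    have : ((1 : ℕ) : ℝ) ≤ ‖((d + 1 : ℕ) : ℂ)‖ := by
      rw [Complex.norm_natCast]; exact_mod_cast Nat.one_le_iff_ne_zero.mpr (by omega)
    simpa using this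
  calc ‖a‖ ^ (d + 1) / (‖(d : ℂ) + 1‖ * ‖1 - q ^ (d + 1)‖ ^ 2)
      ≤ ‖a‖ ^ (d + 1) / (1 * δ ^ 2) := by
        gcongr <;> first | positivity | exact hδ0.le | exact h1 | exact hc
  _ = (‖a‖ / δ ^ 2) * ‖a‖ ^ d := by rw [pow_succ]; ring

lemma summable_F (q a : ℂ) (hq : ‖q‖ < 1) (ha : ‖a‖ < 1) :
    Summable (fun d : ℕ => a ^ (d + 1) / (((d : ℂ) + 1) * (1 - q ^ (d + 1)))) := by
  set δ := 1 - ‖q‖ with hδ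
  have hδ0 := delta_pos q hq
  refine Summable.of_norm_bounded (g := fun d => (‖a‖ / δ) * ‖a‖ ^ d)
    ((summable_geometric_of_lt_one (norm_nonneg a) ha).mul_left _) (fun d => ?_)
  have hc := delta_le q hq d
  rw [norm_div, norm_mul, norm_pow]
  have h1 : (1 : ℝ) ≤ ‖(d : ℂ) + 1‖ := by
    have : ((1 : ℕ) : ℝ) ≤ ‖((d + 1 : ℕ) : ℂ)‖ := by
      rw [Complex.norm_natCast]; exact_mod_cast Nat.one_le_iff_ne_zero.mpr (by omega)
    simpa using this
  calc ‖a‖ ^ (d + 1) / (‖(d : ℂ) + 1‖ * ‖1 - q ^ (d + 1)‖)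
      ≤ ‖a‖ ^ (d + 1) / (1 * δ) := by
        gcongr <;> first | positivity | exact hδ0.le | exact h1 | exact hc
  _ = (‖a‖ / δ) * ‖a‖ ^ d := by rw [pow_succ]; ring

/-- `φ(a,q) = φ(aq,q) · F(a,q)`. -/
lemma phi_eq (q a : ℂ) (hq : ‖q‖ < 1) (ha : ‖a‖ < 1) :
    phiClosed q a = phiClosed q (a * q) * Fser q a := by
  have haq : ‖a * q‖ < 1 := by
    rw [norm_mul]
    calc ‖a‖ * ‖q‖ ≤ ‖a‖ * 1 := by gcongr <;> first | positivity | exact hq.le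
    _ = ‖a‖ := mul_one _
    _ < 1 := ha
  rw [phiClosed, phiClosed, Fser, ← Complex.exp_add]
  congr 1
  rw [← Summable.tsum_add (summable_phi q (a * q) hq haq) (summable_F q a hq ha)]
  refine tsum_congr fun d => ?_
  have hc := one_sub_ne q hq d
  have hD := cast_ne d
  field_simp
  try ring

/-- Functional equation for `F`: `(1-a)·F(a,q) = F(aq,q)`. -/
lemma F_funeq (q a : ℂ) (hq : ‖q‖ < 1) (ha : ‖a‖ < 1) :
    (1 - a) * Fser q a = Fser q (a * q) := by
  have ha' : (1 : ℂ) - a ≠ 0 := by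
    intro h
    have : ‖(1 : ℂ)‖ - ‖a‖ ≤ ‖1 - a‖ := norm_sub_norm_le _ _
    rw [h, norm_zero, norm_one] at this
    linarith
  have hlog : HasSum (fun d : ℕ => a ^ (d + 1) / ((d : ℂ) + 1)) (-Complex.log (1 - a)) := by
    have h0 := Complex.hasSum_taylorSeries_neg_log (z := a) ha
    have := (hasSum_nat_add_iff' (f := fun n : ℕ => a ^ n / (n : ℂ)) 1).mpr h0
    simpa using this
  have hsum : (∑' d : ℕ, a ^ (d + 1) / (((d : ℂ) + 1) * (1 - q ^ (d + 1))))
      = (∑' d : ℕ, (a * q) ^ (d + 1) / (((d : ℂ) + 1) * (1 - q ^ (d + 1))))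
        + (-Complex.log (1 - a)) := by
    rw [← hlog.tsum_eq, ← Summable.tsum_add (summable_F q (a * q) hq (by
      rw [norm_mul]
      calc ‖a‖ * ‖q‖ ≤ ‖a‖ * 1 := by gcongr <;> first | positivity | exact hq.le
      _ = ‖a‖ := mul_one _
      _ < 1 := ha)) hlog.summable]
    refine tsum_congr fun d => ?_
    have hc := one_sub_ne q hq d
    have hD := cast_ne d
    field_simp
    try ring
  rw [Fser, Fser, hsum, Complex.exp_add, Complex.exp_neg, Complex.exp_log ha']
  field_simp
  try ring

lemma prod_ne (q : ℂ) (hq : ‖q‖ < 1) (d : ℕ) :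
    (∏ k ∈ Finset.range d, (1 - q ^ (k + 1))) ≠ 0 :=
  Finset.prod_ne_zero_iff.mpr fun k _ => one_sub_ne q hq k

lemma prod_norm_ge (q : ℂ) (hq : ‖q‖ < 1) (d : ℕ) :
    (1 - ‖q‖) ^ d ≤ ‖∏ k ∈ Finset.range d, (1 - q ^ (k + 1))‖ := by
  rw [norm_prod]
  calc (1 - ‖q‖) ^ d = ∏ k ∈ Finset.range d, (1 - ‖q‖) := by
        rw [Finset.prod_const, Finset.card_range]
  _ ≤ ∏ k ∈ Finset.range d, ‖1 - q ^ (k + 1)‖ :=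
      Finset.prod_le_prod (fun _ _ => (delta_pos q hq).le) (fun k _ => delta_le q hq k)

lemma summable_psi (q a : ℂ) (hq : ‖q‖ < 1) (ha : ‖a‖ < 1) :
    Summable (fun d : ℕ => a ^ d / ∏ k ∈ Finset.range d, (1 - q ^ (k + 1))) := by
  set r := (1 + ‖a‖) / 2 with hr
  have har : ‖a‖ < r := by rw [hr]; linarith
  have hr1 : r < 1 := by rw [hr]; linarith
  have hr0 : 0 < r := lt_of_le_of_lt (norm_nonneg a) har
  refine summable_of_ratio_norm_eventually_le hr1 ?_
  have hto : Tendsto (fun d : ℕ => ‖q‖ ^ (d + 1)) atTop (nhds 0) := by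
    have := tendsto_pow_atTop_nhds_zero_of_lt_one (norm_nonneg q) hq
    exact this.comp (tendsto_add_atTop_nat 1)
  have hpos : (0 : ℝ) < 1 - ‖a‖ / r := by
    rw [sub_pos, div_lt_one hr0]; exact har
  filter_upwards [hto.eventually (gt_mem_nhds hpos)] with d hd
  have hc : ‖a‖ / r ≤ ‖1 - q ^ (d + 1)‖ := by
    have : 1 - ‖q‖ ^ (d + 1) ≤ ‖1 - q ^ (d + 1)‖ := by
      calc 1 - ‖q‖ ^ (d + 1) = ‖(1 : ℂ)‖ - ‖q ^ (d + 1)‖ := by simp [norm_pow]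
      _ ≤ _ := norm_sub_norm_le _ _
    linarith
  have hcpos : (0 : ℝ) < ‖1 - q ^ (d + 1)‖ :=
    lt_of_lt_of_le (delta_pos q hq) (delta_le q hq d)
  have key : a ^ (d + 1) / ∏ k ∈ Finset.range (d + 1), (1 - q ^ (k + 1))
      = (a / (1 - q ^ (d + 1))) * (a ^ d / ∏ k ∈ Finset.range d, (1 - q ^ (k + 1))) := by
    rw [Finset.prod_range_succ, pow_succ]
    have h1 := prod_ne q hq d
    have h2 := one_sub_ne q hq d
    field_simp
    try ring
  rw [key, norm_mul, norm_div]
  have : ‖a‖ / ‖1 - q ^ (d + 1)‖ ≤ r := by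
    rw [div_le_iff₀ hcpos]
    calc ‖a‖ = r * (‖a‖ / r) := by field_simp
    _ ≤ r * ‖1 - q ^ (d + 1)‖ := by gcongr <;> first | positivity | exact hc
  exact mul_le_mul_of_nonneg_right this (norm_nonneg _)

/-- Functional equation for `ψ`: `(1-a)·ψ(a,q) = ψ(aq,q)`. -/
lemma psi_funeq (q a : ℂ) (hq : ‖q‖ < 1) (ha : ‖a‖ < 1) :
    (1 - a) * psiOpen q a = psiOpen q (a * q) := by
  have haq : ‖a * q‖ < 1 := by
    rw [norm_mul]
    calc ‖a‖ * ‖q‖ ≤ ‖a‖ * 1 := by gcongr <;> first | positivity | exact hq.le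
    _ = ‖a‖ := mul_one _
    _ < 1 := ha
  set P : ℕ → ℂ := fun d => ∏ k ∈ Finset.range d, (1 - q ^ (k + 1)) with hP
  have hf : HasSum (fun d : ℕ => a ^ d / P d) (psiOpen q a) :=
    (summable_psi q a hq ha).hasSum
  have hg : HasSum (fun d : ℕ => (a * q) ^ d / P d) (psiOpen q (a * q)) :=
    (summable_psi q (a * q) hq haq).hasSum
  have hh : HasSum (fun d : ℕ => a ^ d / P d - (a * q) ^ d / P d)
      (psiOpen q a - psiOpen q (a * q)) := hf.sub hg
  have hshift : HasSum (fun d : ℕ => a ^ (d + 1) / P (d + 1) - (a * q) ^ (d + 1) / P (d + 1))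
      (psiOpen q a - psiOpen q (a * q)) := by
    have := (hasSum_nat_add_iff'
      (f := fun d : ℕ => a ^ d / P d - (a * q) ^ d / P d) 1).mpr hh
    simpa [hP] using this
  have hterm : ∀ d : ℕ, a ^ (d + 1) / P (d + 1) - (a * q) ^ (d + 1) / P (d + 1)
      = a * (a ^ d / P d) := by
    intro d
    have hPd := prod_ne q hq d
    have hc := one_sub_ne q hq d
    have hPs : P (d + 1) = P d * (1 - q ^ (d + 1)) := by
      rw [hP]; exact Finset.prod_range_succ _ _
    rw [hPs, mul_pow]
    field_simp
    ring
  have hmul : HasSum (fun d : ℕ => a * (a ^ d / P d)) (a * psiOpen q a) := hf.mul_left a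
  have heq : a * psiOpen q a = psiOpen q a - psiOpen q (a * q) := by
    refine hmul.unique ?_
    refine HasSum.congr_fun hshift fun d => (hterm d).symm
  rw [sub_mul, one_mul]
  linear_combination -heq

lemma norm_aq_lt (q a : ℂ) (hq : ‖q‖ < 1) (ha : ‖a‖ < 1) (n : ℕ) : ‖a * q ^ n‖ < 1 := by
  rw [norm_mul, norm_pow]
  calc ‖a‖ * ‖q‖ ^ n ≤ ‖a‖ * 1 := by
        gcongr
        exact pow_le_one₀ (norm_nonneg q) hq.le
  _ = ‖a‖ := mul_one _
  _ < 1 := ha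

/-- Iterated identity: `F(aqⁿ)·ψ(a) = ψ(aqⁿ)·F(a)`. -/
lemma iter_eq (q a : ℂ) (hq : ‖q‖ < 1) (ha : ‖a‖ < 1) (n : ℕ) :
    Fser q (a * q ^ n) * psiOpen q a = psiOpen q (a * q ^ n) * Fser q a := by
  induction n with
  | zero => simp [mul_comm]
  | succ n ih =>
    have hb := norm_aq_lt q a hq ha n
    have hstep : a * q ^ (n + 1) = (a * q ^ n) * q := by ring
    rw [hstep, ← F_funeq q (a * q ^ n) hq hb, ← psi_funeq q (a * q ^ n) hq hb,
      mul_assoc, ih, mul_assoc]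

lemma tendsto_aq (q a : ℂ) (hq : ‖q‖ < 1) :
    Tendsto (fun n : ℕ => ‖a * q ^ n‖) atTop (nhds 0) := by
  have : (fun n : ℕ => ‖a * q ^ n‖) = fun n => ‖a‖ * ‖q‖ ^ n := by
    funext n; rw [norm_mul, norm_pow]
  rw [this]
  have := (tendsto_pow_atTop_nhds_zero_of_lt_one (norm_nonneg q) hq).const_mul ‖a‖
  simpa using this

/-- `F(aqⁿ) → 1`. -/
lemma F_tendsto (q a : ℂ) (hq : ‖q‖ < 1) (ha : ‖a‖ < 1) :
    Tendsto (fun n : ℕ => Fser q (a * q ^ n)) atTop (nhds 1) := by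
  set δ := 1 - ‖q‖ with hδ
  have hδ0 := delta_pos q hq
  have hS : Tendsto (fun n : ℕ => ∑' d : ℕ,
      (a * q ^ n) ^ (d + 1) / (((d : ℂ) + 1) * (1 - q ^ (d + 1)))) atTop (nhds 0) := by
    have hg : Tendsto (fun n : ℕ => δ⁻¹ * (1 - ‖a‖)⁻¹ * ‖a * q ^ n‖) atTop (nhds 0) := by
      have h := (tendsto_aq q a hq).const_mul (δ⁻¹ * (1 - ‖a‖)⁻¹)
      rw [mul_zero] at h
      exact h
    refine squeeze_zero_norm' (Filter.Eventually.of_forall fun n => ?_) hg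
    set b := a * q ^ n with hb
    have hbnorm : ‖b‖ ≤ ‖a‖ := by
      rw [hb, norm_mul, norm_pow]
      calc ‖a‖ * ‖q‖ ^ n ≤ ‖a‖ * 1 := by
            gcongr; exact pow_le_one₀ (norm_nonneg q) hq.le
      _ = ‖a‖ := mul_one _
    have hbound : ∀ d : ℕ, ‖b ^ (d + 1) / (((d : ℂ) + 1) * (1 - q ^ (d + 1)))‖
        ≤ (‖b‖ / δ) * ‖a‖ ^ d := by
      intro d
      rw [norm_div, norm_mul, norm_pow]
      have h1 : (1 : ℝ) ≤ ‖(d : ℂ) + 1‖ := by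
        have : ((1 : ℕ) : ℝ) ≤ ‖((d + 1 : ℕ) : ℂ)‖ := by
          rw [Complex.norm_natCast]; exact_mod_cast Nat.one_le_iff_ne_zero.mpr (by omega)
        simpa using this
      have hc := delta_le q hq d
      calc ‖b‖ ^ (d + 1) / (‖(d : ℂ) + 1‖ * ‖1 - q ^ (d + 1)‖)
          ≤ ‖b‖ ^ (d + 1) / (1 * δ) := by
            gcongr <;> first | positivity | exact hδ0.le | exact h1 | exact hc
      _ = (‖b‖ / δ) * ‖b‖ ^ d := by rw [pow_succ]; ring
      _ ≤ (‖b‖ / δ) * ‖a‖ ^ d := by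
          gcongr <;> first | positivity | exact hbnorm | exact norm_nonneg b
    calc ‖∑' d : ℕ, b ^ (d + 1) / (((d : ℂ) + 1) * (1 - q ^ (d + 1)))‖
        ≤ ∑' d : ℕ, ‖b ^ (d + 1) / (((d : ℂ) + 1) * (1 - q ^ (d + 1)))‖ := by
          refine norm_tsum_le_tsum_norm ?_
          exact Summable.of_nonneg_of_le (fun d => norm_nonneg _) hbound
            (((summable_geometric_of_lt_one (norm_nonneg a) ha).mul_left _))
    _ ≤ ∑' d : ℕ, (‖b‖ / δ) * ‖a‖ ^ d := by
          refine Summable.tsum_le_tsum hbound ?_ ?_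
          · refine Summable.of_nonneg_of_le (fun d => norm_nonneg _) hbound
              (((summable_geometric_of_lt_one (norm_nonneg a) ha).mul_left _))
          · exact (summable_geometric_of_lt_one (norm_nonneg a) ha).mul_left _
    _ = (‖b‖ / δ) * (1 - ‖a‖)⁻¹ := by
          rw [tsum_mul_left, tsum_geometric_of_lt_one (norm_nonneg a) ha]
    _ = δ⁻¹ * (1 - ‖a‖)⁻¹ * ‖b‖ := by rw [div_eq_mul_inv]; ring
  have := (Complex.continuous_exp.tendsto 0).comp hS
  simpa [Fser, Complex.exp_zero, Function.comp_def] using this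

/-- `ψ(aqⁿ) → 1`. -/
lemma psi_tendsto (q a : ℂ) (hq : ‖q‖ < 1) (ha : ‖a‖ < 1) :
    Tendsto (fun n : ℕ => psiOpen q (a * q ^ n)) atTop (nhds 1) := by
  set δ := 1 - ‖q‖ with hδ
  have hδ0 := delta_pos q hq
  have key : Tendsto (fun n : ℕ => psiOpen q (a * q ^ n) - 1) atTop (nhds 0) := by
    have hg : Tendsto (fun n : ℕ => 2 / δ * ‖a * q ^ n‖) atTop (nhds 0) := by
      have h := (tendsto_aq q a hq).const_mul (2 / δ)
      rw [mul_zero] at h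
      exact h
    refine squeeze_zero_norm' ?_ hg
    have hev : ∀ᶠ n : ℕ in atTop, ‖a * q ^ n‖ ≤ δ / 2 := by
      have := (tendsto_aq q a hq).eventually (ge_mem_nhds (show (0:ℝ) < δ / 2 by positivity))
      filter_upwards [this] with n h; exact h
    filter_upwards [hev] with n hn
    set b := a * q ^ n with hb
    have hbq : ‖b‖ < 1 := norm_aq_lt q a hq ha n
    set P : ℕ → ℂ := fun d => ∏ k ∈ Finset.range d, (1 - q ^ (k + 1)) with hP
    have hf : HasSum (fun d : ℕ => b ^ d / P d) (psiOpen q b) :=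
      (summable_psi q b hq hbq).hasSum
    have hshift : HasSum (fun d : ℕ => b ^ (d + 1) / P (d + 1)) (psiOpen q b - 1) := by
      have := (hasSum_nat_add_iff' (f := fun d : ℕ => b ^ d / P d) 1).mpr hf
      simpa [hP] using this
    rw [← hshift.tsum_eq]
    have hbd2 : ‖b‖ / δ ≤ 1 / 2 := by
      rw [div_le_div_iff₀ hδ0 (by norm_num)]
      linarith
    have hbound : ∀ d : ℕ, ‖b ^ (d + 1) / P (d + 1)‖ ≤ (‖b‖ / δ) * (1 / 2) ^ d := by
      intro d
      rw [norm_div, norm_pow]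
      have hpn := prod_norm_ge q hq (d + 1)
      have hppos : (0 : ℝ) < ‖P (d + 1)‖ := lt_of_lt_of_le (by positivity) hpn
      calc ‖b‖ ^ (d + 1) / ‖P (d + 1)‖ ≤ ‖b‖ ^ (d + 1) / δ ^ (d + 1) := by
            gcongr <;> first | positivity | exact hpn
      _ = (‖b‖ / δ) * (‖b‖ / δ) ^ d := by rw [← div_pow, pow_succ']
      _ ≤ (‖b‖ / δ) * (1 / 2) ^ d := by
            gcongr <;> first | positivity | exact hbd2
    have hsum2 : Summable (fun d : ℕ => (‖b‖ / δ) * (1 / 2) ^ d) :=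
      (summable_geometric_of_lt_one (by norm_num) (by norm_num)).mul_left _
    calc ‖∑' d : ℕ, b ^ (d + 1) / P (d + 1)‖
        ≤ ∑' d : ℕ, ‖b ^ (d + 1) / P (d + 1)‖ := by
          refine norm_tsum_le_tsum_norm ?_
          exact Summable.of_nonneg_of_le (fun d => norm_nonneg _) hbound hsum2
    _ ≤ ∑' d : ℕ, (‖b‖ / δ) * (1 / 2) ^ d := by
          refine Summable.tsum_le_tsum hbound ?_ hsum2
          exact Summable.of_nonneg_of_le (fun d => norm_nonneg _) hbound hsum2
    _ = (‖b‖ / δ) * (1 - 1 / 2)⁻¹ := by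
          rw [tsum_mul_left, tsum_geometric_of_lt_one (by norm_num) (by norm_num)]
    _ = 2 / δ * ‖b‖ := by
          have h2 : (1 - 1 / 2 : ℝ)⁻¹ = 2 := by norm_num
          rw [h2]; field_simp; try ring
  have := key.add (tendsto_const_nhds : Tendsto (fun _ : ℕ => (1 : ℂ)) atTop (nhds 1))
  simpa using this

end PhiPsiAux

/-- For `|q| < 1` and `|a| < 1` one has `φ(a,q) = φ(aq,q) · ψ(a,q)`. -/
theorem phi_eq_phi_shift_mul_psi (q a : ℂ)
    (hq : ‖q‖ < 1) (ha : ‖a‖ < 1) :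
    phiClosed q a = phiClosed q (a * q) * psiOpen q a := by
  have key : psiOpen q a = Fser q a := by
    have h1 : Tendsto (fun n : ℕ => Fser q (a * q ^ n) * psiOpen q a) atTop
        (nhds (psiOpen q a)) := by
      have := (PhiPsiAux.F_tendsto q a hq ha).mul_const (psiOpen q a)
      simpa using this
    have h2 : Tendsto (fun n : ℕ => Fser q (a * q ^ n) * psiOpen q a) atTop
        (nhds (Fser q a)) := by
      have := (PhiPsiAux.psi_tendsto q a hq ha).mul_const (Fser q a)
      refine Tendsto.congr (fun n => ?_) (by simpa using this)
      exact (PhiPsiAux.iter_eq q a hq ha n).symm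
    exact tendsto_nhds_unique h1 h2
  rw [key]
  exact PhiPsiAux.phi_eq q a hq ha
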